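/- Let d ≥ 2 be an integer, 1 < α < 2, 0 < γ ≤ 2. There exists a constant N' > 0, depending only on d, α, γ, such that for every nonnegative f ∈ C_c(ℝ^{d+1}) and every ρ > 0, ∫∫_{{(s,y) : 0 ≤ s ≤ ρ^α, |y| ≤ s^{1/α}}} s^{γ/2 − d/α − 1} f(s,y) dy ds ≤ N' ρ^{αγ/2} M f(0,0). -/

import Mathlib

open MeasureTheory ENNReal Set Filter

noncomputable section

/-- The spatial space `ℝ^d`. -/
abbrev Spc (d : ℕ) := EuclideanSpace ℝ (Fin d)

/-- Parabolic cylinder `C_ρ(t,x) = {(s,y) : t ≤ s ≤ t + ρ^α, |y - x| ≤ ρ}`. -/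
def cylP (d : ℕ) (α ρ t : ℝ) (x : Spc d) : Set (ℝ × Spc d) :=
  {p | t ≤ p.1 ∧ p.1 ≤ t + ρ ^ α ∧ dist p.2 x ≤ ρ}

/-- Average of `f` over the parabolic cylinder `C_ρ(t,x)`. -/
def cylAvg (d : ℕ) (α ρ t : ℝ) (x : Spc d) (f : ℝ × Spc d → ℝ≥0∞) : ℝ≥0∞ :=
  (volume (cylP d α ρ t x))⁻¹ * ∫⁻ p in cylP d α ρ t x, f p

/-- Parabolic Morrey norm `‖v‖_{E_q}`. -/
def morreyE (d : ℕ) (α q : ℝ) (v : ℝ × Spc d → ℝ≥0∞) : ℝ≥0∞ :=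
  ⨆ (ρ : ℝ) (_ : 0 < ρ) (t : ℝ) (x : Spc d),
    ENNReal.ofReal ρ * (cylAvg d α ρ t x (fun p => v p ^ q)) ^ (1 / q)

/-- Elliptic Morrey norm `‖w‖_{M_q}` on `ℝ^d`. -/
def morreyM (d : ℕ) (q : ℝ) (w : Spc d → ℝ≥0∞) : ℝ≥0∞ :=
  ⨆ (ρ : ℝ) (_ : 0 < ρ) (x : Spc d),
    ENNReal.ofReal ρ *
      ((volume (Metric.closedBall x ρ))⁻¹ *
        ∫⁻ y in Metric.closedBall x ρ, w y ^ q) ^ (1 / q)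

/-- Fractional (parabolic) maximal function `M_β f(t,x)`. -/
def maxFun (d : ℕ) (α β : ℝ) (f : ℝ × Spc d → ℝ≥0∞) (t : ℝ) (x : Spc d) : ℝ≥0∞ :=
  ⨆ (ρ : ℝ) (_ : 0 < ρ), ENNReal.ofReal (ρ ^ β) * cylAvg d α ρ t x f

/-- Uncentered parabolic maximal function `M̂ f(z)`, sup over all parabolic
cylinders containing `z`. -/
def hatM (d : ℕ) (α : ℝ) (f : ℝ × Spc d → ℝ≥0∞) (z : ℝ × Spc d) : ℝ≥0∞ :=
  ⨆ (ρ : ℝ) (_ : 0 < ρ) (t : ℝ) (x : Spc d) (_ : z ∈ cylP d α ρ t x),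
    cylAvg d α ρ t x f

/-- The kernel `p_γ(s,y) = 1_{s>0} s^{γ/2} min(|y|^{-d-α}, s^{-(d+α)/α})`. -/
def pKer (d : ℕ) (α γ : ℝ) (s : ℝ) (y : Spc d) : ℝ≥0∞ :=
  if 0 < s then
    (if s ^ (1 / α) ≤ ‖y‖ then ENNReal.ofReal (s ^ (γ / 2) * ‖y‖ ^ (-(d : ℝ) - α))
     else ENNReal.ofReal (s ^ (γ / 2 - ((d : ℝ) + α) / α)))
  else 0

/-- `P_γ f(t,x) = ∫ p_γ(s,y) f(t+s, x+y) dy ds`. -/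
def Pop (d : ℕ) (α γ : ℝ) (f : ℝ × Spc d → ℝ≥0∞) (t : ℝ) (x : Spc d) : ℝ≥0∞ :=
  ∫⁻ p : ℝ × Spc d, pKer d α γ p.1 p.2 * f (t + p.1, x + p.2)

/-- `P*_γ f(t,x) = ∫ p_γ(s,y) f(t-s, x+y) dy ds`. -/
def PopStar (d : ℕ) (α γ : ℝ) (f : ℝ × Spc d → ℝ≥0∞) (t : ℝ) (x : Spc d) : ℝ≥0∞ :=
  ∫⁻ p : ℝ × Spc d, pKer d α γ p.1 p.2 * f (t - p.1, x + p.2)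

private lemma key_calc (d : ℕ) (α γ : ℝ) (hα : 0 < α) (u : ℝ) (hu : 0 < u) (k : ℕ) :
    (u / 2 ^ (k + 1)) ^ (γ / 2 - (d : ℝ) / α - 1) * ((u / 2 ^ k) * ((u / 2 ^ k) ^ (1 / α)) ^ d)
      = (2 : ℝ) ^ (1 + (d : ℝ) / α) * u ^ (γ / 2) * (((2 : ℝ) ^ (γ / 2))⁻¹) ^ (k + 1) := by
  have hb : (0 : ℝ) < u / 2 ^ (k + 1) := by positivity
  have h2b : (u / 2 ^ k : ℝ) = 2 * (u / 2 ^ (k + 1)) := by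
    field_simp
    ring
  set b := (u / 2 ^ (k + 1) : ℝ) with hbdef
  rw [h2b]
  have hpow : ((2 * b) ^ (1 / α)) ^ d = (2 * b) ^ ((d : ℝ) / α) := by
    rw [← Real.rpow_natCast ((2 * b) ^ (1 / α)) d, ← Real.rpow_mul (by positivity)]
    congr 1
    field_simp
  have h1 : (2 * b) * (2 * b) ^ ((d : ℝ) / α) = (2 * b) ^ (1 + (d : ℝ) / α) := by
    rw [Real.rpow_add (by positivity), Real.rpow_one]
  rw [hpow, h1, Real.mul_rpow (by norm_num) hb.le]
  have h2 : b ^ (γ / 2 - (d : ℝ) / α - 1) * b ^ (1 + (d : ℝ) / α) = b ^ (γ / 2) := by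
    rw [← Real.rpow_add hb]
    congr 1
    ring
  have h3 : b ^ (γ / 2) = u ^ (γ / 2) * (((2 : ℝ) ^ (γ / 2))⁻¹) ^ (k + 1) := by
    have hb2 : b = u * ((2 : ℝ)⁻¹) ^ (k + 1) := by
      rw [hbdef, div_eq_mul_inv, inv_pow]
    rw [hb2, Real.mul_rpow hu.le (by positivity),
      ← Real.rpow_natCast ((2 : ℝ)⁻¹) (k + 1), ← Real.rpow_mul (by norm_num),
      mul_comm ((k + 1 : ℕ) : ℝ) (γ / 2), Real.rpow_mul (by norm_num : (0:ℝ) ≤ 2⁻¹),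
      Real.rpow_natCast, Real.inv_rpow (by norm_num)]
  calc b ^ (γ / 2 - (d : ℝ) / α - 1) * ((2 : ℝ) ^ (1 + (d : ℝ) / α) * b ^ (1 + (d : ℝ) / α))
      = (2 : ℝ) ^ (1 + (d : ℝ) / α) * (b ^ (γ / 2 - (d : ℝ) / α - 1) * b ^ (1 + (d : ℝ) / α)) := by
        ring
    _ = (2 : ℝ) ^ (1 + (d : ℝ) / α) * b ^ (γ / 2) := by rw [h2]
    _ = _ := by rw [h3]; ring

/-- near-field estimate over the region `Q^c ∩ C_ρ(0,0)`, where
`Q^c = {(s,y) : |y| < s^{1/α}}`: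
`∫∫_{0 ≤ s ≤ ρ^α, |y| ≤ s^{1/α}} s^{γ/2-d/α-1} f(s,y) dy ds ≤ N' ρ^{αγ/2} M f(0,0)`. -/
theorem stmt_9 (d : ℕ) (hd : 2 ≤ d) (α γ : ℝ) (hα1 : 1 < α) (hα2 : α < 2)
    (hγ1 : 0 < γ) (hγ2 : γ ≤ 2) :
    ∃ N' : ℝ, 0 < N' ∧
      ∀ (f : ℝ × Spc d → ℝ), Continuous f → HasCompactSupport f → (∀ z, 0 ≤ f z) →
      ∀ (ρ : ℝ), 0 < ρ →
      (∫⁻ z in {z : ℝ × Spc d | 0 ≤ z.1 ∧ z.1 ≤ ρ ^ α ∧ ‖z.2‖ ≤ z.1 ^ (1 / α)},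
          ENNReal.ofReal (z.1 ^ (γ / 2 - d / α - 1) * f z)) ≤
        ENNReal.ofReal (N' * ρ ^ (α * γ / 2)) *
          maxFun d α 0 (fun z => ENNReal.ofReal (f z)) 0 0 := by
  classical
  have hα0 : (0:ℝ) < α := lt_trans one_pos hα1
  have hαne : α ≠ 0 := ne_of_gt hα0
  have hd0 : (0:ℝ) < (d:ℝ) := by
    have : 0 < d := lt_of_lt_of_le (by norm_num) hd
    exact_mod_cast this
  have hdα : 0 < (d:ℝ)/α := div_pos hd0 hα0
  have h2γ : (1:ℝ) < (2:ℝ) ^ (γ/2) := by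
    have h := Real.rpow_lt_rpow_of_exponent_lt (x := 2) one_lt_two
      (show (0:ℝ) < γ/2 by positivity)
    simpa using h
  set r : ℝ := ((2:ℝ) ^ (γ/2))⁻¹ with hr_def
  have hr0 : 0 < r := by positivity
  have hr1 : r < 1 := inv_lt_one_of_one_lt₀ h2γ
  have h1r : 0 < 1 - r := by linarith
  set Vb := volume (Metric.ball (0 : Spc d) 1) with hVb_def
  have hVb0 : Vb ≠ 0 := (Metric.measure_ball_pos _ _ one_pos).ne'
  have hVbt : Vb ≠ ⊤ := measure_ball_lt_top.ne
  have he : γ/2 - (d:ℝ)/α - 1 < 0 := by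
    have : γ/2 ≤ 1 := by linarith
    linarith
  refine ⟨(2:ℝ) ^ (1 + (d:ℝ)/α) * (r * (1-r)⁻¹) * Vb.toReal, ?_, ?_⟩
  · have h1 : 0 < Vb.toReal := ENNReal.toReal_pos hVb0 hVbt
    have h2 : (0:ℝ) < (2:ℝ) ^ (1 + (d:ℝ)/α) := Real.rpow_pos_of_pos two_pos _
    have h3 : 0 < r * (1-r)⁻¹ := mul_pos hr0 (inv_pos.mpr h1r)
    positivity
  intro f hf hsupp hf0 ρ hρ
  set u := ρ ^ α with hu_def
  have hu : 0 < u := Real.rpow_pos_of_pos hρ α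
  set f' : ℝ × Spc d → ℝ≥0∞ := fun z => ENNReal.ofReal (f z) with hf'_def
  set M := maxFun d α 0 f' 0 0 with hM_def
  -- the dyadic pieces
  set A : ℕ → Set (ℝ × Spc d) :=
    fun k => {z | u / 2 ^ (k+1) ≤ z.1 ∧ z.1 ≤ u / 2 ^ k ∧ ‖z.2‖ ≤ z.1 ^ (1/α)} with hA_def
  have hck : ∀ k : ℕ, (0:ℝ) < u / 2 ^ k := fun k => by positivity
  -- covering
  have hcover : {z : ℝ × Spc d | 0 ≤ z.1 ∧ z.1 ≤ u ∧ ‖z.2‖ ≤ z.1 ^ (1/α)} ⊆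
      {z : ℝ × Spc d | z.1 = 0} ∪ ⋃ k, A k := by
    rintro z ⟨h0, h1, h2⟩
    rcases eq_or_lt_of_le h0 with h | h
    · exact Or.inl h.symm
    · right
      have hex : ∃ k : ℕ, u / 2 ^ (k+1) ≤ z.1 := by
        obtain ⟨n, hn⟩ := pow_unbounded_of_one_lt (u / z.1) (one_lt_two (α := ℝ))
        refine ⟨n, ?_⟩
        have h2n : u / 2 ^ n < z.1 := by
          rw [div_lt_iff₀ (by positivity)]
          rw [div_lt_iff₀ h] at hn
          linarith [hn]
        have : u / 2 ^ (n+1) ≤ u / 2 ^ n := by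
          apply div_le_div_of_nonneg_left hu.le (by positivity)
          exact pow_le_pow_right₀ (by norm_num) (Nat.le_succ n)
        linarith
      set k₀ := Nat.find hex with hk₀
      have hPk : u / 2 ^ (k₀+1) ≤ z.1 := Nat.find_spec hex
      have hup : z.1 ≤ u / 2 ^ k₀ := by
        rcases Nat.eq_zero_or_pos k₀ with h' | h'
        · rw [h']; simpa using h1
        · obtain ⟨j, hj⟩ := Nat.exists_eq_succ_of_ne_zero h'.ne'
          have := Nat.find_min hex (m := j) (by omega)
          rw [hj]
          exact le_of_not_ge (by simpa [Nat.succ_eq_add_one] using this)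
      refine mem_iUnion.2 ⟨k₀, ?_⟩
      simp only [hA_def, Set.mem_setOf_eq]
      exact ⟨hPk, hup, h2⟩
  -- measurability of pieces
  have hAmeas : ∀ k, MeasurableSet (A k) := by
    intro k
    have hcont : Continuous fun z : ℝ × Spc d => z.1 ^ (1/α) :=
      continuous_fst.rpow_const (fun z => Or.inr (by positivity))
    exact (measurableSet_le measurable_const measurable_fst).inter
      ((measurableSet_le measurable_fst measurable_const).inter
        (measurableSet_le continuous_snd.norm.measurable hcont.measurable))
  -- ρ_k and its properties
  have hρα : ∀ k : ℕ, ((u / 2 ^ k) ^ (1/α)) ^ α = u / 2 ^ k := by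
    intro k
    rw [← Real.rpow_mul (hck k).le, one_div_mul_cancel hαne, Real.rpow_one]
  have hρkpos : ∀ k : ℕ, (0:ℝ) < (u / 2 ^ k) ^ (1/α) :=
    fun k => Real.rpow_pos_of_pos (hck k) _
  -- each piece is inside the cylinder
  have hAsub : ∀ k, A k ⊆ cylP d α ((u / 2 ^ k) ^ (1/α)) 0 0 := by
    intro k z hz
    simp only [hA_def, Set.mem_setOf_eq] at hz
    obtain ⟨hb, hc, hn⟩ := hz
    have hz0 : (0:ℝ) ≤ z.1 := le_trans (hck (k+1)).le hb
    refine ⟨hz0, ?_, ?_⟩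
    · rw [zero_add, hρα k]; exact hc
    · rw [dist_zero_right]
      exact le_trans hn (Real.rpow_le_rpow hz0 hc (by positivity))
  -- volume of the cylinder
  have hvol : ∀ k : ℕ, volume (cylP d α ((u / 2 ^ k) ^ (1/α)) 0 0)
      = ENNReal.ofReal (u / 2 ^ k) *
        (ENNReal.ofReal (((u / 2 ^ k) ^ (1/α)) ^ d) * Vb) := by
    intro k
    have hsetP : cylP d α ((u / 2 ^ k) ^ (1/α)) 0 0
        = Set.Icc (0:ℝ) (((u / 2 ^ k) ^ (1/α)) ^ α) ×ˢ
          Metric.closedBall (0:Spc d) ((u / 2 ^ k) ^ (1/α)) := by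
      ext z
      simp [cylP, Set.mem_prod, Metric.mem_closedBall, and_assoc]
    rw [hsetP, Measure.volume_eq_prod, Measure.prod_prod, Real.volume_Icc, sub_zero, hρα k,
      Measure.addHaar_closedBall _ _ (hρkpos k).le, finrank_euclideanSpace_fin, hVb_def]
  have hvol0 : ∀ k : ℕ, volume (cylP d α ((u / 2 ^ k) ^ (1/α)) 0 0) ≠ 0 := by
    intro k
    rw [hvol k]
    exact mul_ne_zero (ENNReal.ofReal_pos.mpr (hck k)).ne'
      (mul_ne_zero (ENNReal.ofReal_pos.mpr (by positivity)).ne' hVb0)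
  have hvolt : ∀ k : ℕ, volume (cylP d α ((u / 2 ^ k) ^ (1/α)) 0 0) ≠ ⊤ := by
    intro k
    rw [hvol k]
    exact ENNReal.mul_ne_top ENNReal.ofReal_ne_top
      (ENNReal.mul_ne_top ENNReal.ofReal_ne_top hVbt)
  -- integral over the cylinder is controlled by M
  have hcyl : ∀ k : ℕ, (∫⁻ z in cylP d α ((u / 2 ^ k) ^ (1/α)) 0 0, f' z)
      ≤ volume (cylP d α ((u / 2 ^ k) ^ (1/α)) 0 0) * M := by
    intro k
    have h1 : cylAvg d α ((u / 2 ^ k) ^ (1/α)) 0 0 f' ≤ M := by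
      rw [hM_def, maxFun]
      have heq : ENNReal.ofReal (((u / 2 ^ k) ^ (1/α)) ^ (0:ℝ)) *
          cylAvg d α ((u / 2 ^ k) ^ (1/α)) 0 0 f'
          = cylAvg d α ((u / 2 ^ k) ^ (1/α)) 0 0 f' := by
        rw [Real.rpow_zero, ENNReal.ofReal_one, one_mul]
      rw [← heq]
      exact le_iSup_of_le ((u / 2 ^ k) ^ (1/α)) (le_iSup_of_le (hρkpos k) le_rfl)
    calc (∫⁻ z in cylP d α ((u / 2 ^ k) ^ (1/α)) 0 0, f' z)
        = volume (cylP d α ((u / 2 ^ k) ^ (1/α)) 0 0) *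
          cylAvg d α ((u / 2 ^ k) ^ (1/α)) 0 0 f' := by
          rw [cylAvg, ← mul_assoc, ENNReal.mul_inv_cancel (hvol0 k) (hvolt k), one_mul]
      _ ≤ _ := mul_le_mul_right h1 _
  -- per-piece estimate
  have hAk : ∀ k : ℕ, (∫⁻ z in A k, ENNReal.ofReal (z.1 ^ (γ/2 - (d:ℝ)/α - 1) * f z))
      ≤ ENNReal.ofReal ((u / 2 ^ (k+1)) ^ (γ/2 - (d:ℝ)/α - 1)) *
        (volume (cylP d α ((u / 2 ^ k) ^ (1/α)) 0 0) * M) := by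
    intro k
    calc (∫⁻ z in A k, ENNReal.ofReal (z.1 ^ (γ/2 - (d:ℝ)/α - 1) * f z))
        ≤ ∫⁻ z in A k, ENNReal.ofReal ((u / 2 ^ (k+1)) ^ (γ/2 - (d:ℝ)/α - 1)) * f' z := by
          refine setLIntegral_mono' (hAmeas k) (fun z hz => ?_)
          simp only [hA_def, Set.mem_setOf_eq] at hz
          obtain ⟨hb, -, -⟩ := hz
          rw [hf'_def, ← ENNReal.ofReal_mul (Real.rpow_nonneg (hck (k+1)).le _)]
          exact ENNReal.ofReal_le_ofReal
            (mul_le_mul_of_nonneg_right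
              (Real.rpow_le_rpow_of_nonpos (hck (k+1)) hb he.le) (hf0 z))
      _ = ENNReal.ofReal ((u / 2 ^ (k+1)) ^ (γ/2 - (d:ℝ)/α - 1)) * ∫⁻ z in A k, f' z :=
          lintegral_const_mul' _ _ ENNReal.ofReal_ne_top
      _ ≤ ENNReal.ofReal ((u / 2 ^ (k+1)) ^ (γ/2 - (d:ℝ)/α - 1)) *
          ∫⁻ z in cylP d α ((u / 2 ^ k) ^ (1/α)) 0 0, f' z :=
          mul_le_mul_right (lintegral_mono_set (hAsub k)) _
      _ ≤ _ := mul_le_mul_right (hcyl k) _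
  -- integral over the zero slice vanishes
  have hzero : (∫⁻ z in {z : ℝ × Spc d | z.1 = 0},
      ENNReal.ofReal (z.1 ^ (γ/2 - (d:ℝ)/α - 1) * f z)) = 0 := by
    have hm : MeasurableSet {z : ℝ × Spc d | z.1 = 0} :=
      measurable_fst (measurableSet_singleton 0)
    refine le_antisymm ?_ zero_le
    calc (∫⁻ z in {z : ℝ × Spc d | z.1 = 0},
          ENNReal.ofReal (z.1 ^ (γ/2 - (d:ℝ)/α - 1) * f z))
        ≤ ∫⁻ _z in {z : ℝ × Spc d | z.1 = 0}, (0:ℝ≥0∞) := by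
          refine setLIntegral_mono' hm (fun z hz => ?_)
          simp only [Set.mem_setOf_eq] at hz
          rw [hz, Real.zero_rpow he.ne, zero_mul, ENNReal.ofReal_zero]
      _ = 0 := lintegral_zero
  -- geometric series
  have hgeo : (∑' k : ℕ, (ENNReal.ofReal r) ^ (k+1)) = ENNReal.ofReal (r * (1-r)⁻¹) := by
    calc (∑' k : ℕ, (ENNReal.ofReal r) ^ (k+1))
        = ∑' k : ℕ, ENNReal.ofReal r * (ENNReal.ofReal r) ^ k := by
          refine tsum_congr fun k => ?_
          rw [pow_succ, mul_comm]
      _ = ENNReal.ofReal r * ∑' k : ℕ, (ENNReal.ofReal r) ^ k := ENNReal.tsum_mul_left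
      _ = ENNReal.ofReal r * (1 - ENNReal.ofReal r)⁻¹ := by rw [ENNReal.tsum_geometric]
      _ = ENNReal.ofReal (r * (1-r)⁻¹) := by
          rw [ENNReal.ofReal_mul hr0.le, ENNReal.ofReal_inv_of_pos h1r,
            ENNReal.ofReal_sub 1 hr0.le, ENNReal.ofReal_one]
  -- final computation
  have huγ : u ^ (γ/2) = ρ ^ (α*γ/2) := by
    rw [hu_def, ← Real.rpow_mul hρ.le]
    congr 1
    ring
  calc (∫⁻ z in {z : ℝ × Spc d | 0 ≤ z.1 ∧ z.1 ≤ u ∧ ‖z.2‖ ≤ z.1 ^ (1/α)},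
        ENNReal.ofReal (z.1 ^ (γ/2 - (d:ℝ)/α - 1) * f z))
      ≤ ∫⁻ z in ({z : ℝ × Spc d | z.1 = 0} ∪ ⋃ k, A k),
          ENNReal.ofReal (z.1 ^ (γ/2 - (d:ℝ)/α - 1) * f z) := lintegral_mono_set hcover
    _ ≤ (∫⁻ z in {z : ℝ × Spc d | z.1 = 0},
          ENNReal.ofReal (z.1 ^ (γ/2 - (d:ℝ)/α - 1) * f z)) +
        ∫⁻ z in ⋃ k, A k, ENNReal.ofReal (z.1 ^ (γ/2 - (d:ℝ)/α - 1) * f z) :=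
        lintegral_union_le _ _ _
    _ = ∫⁻ z in ⋃ k, A k, ENNReal.ofReal (z.1 ^ (γ/2 - (d:ℝ)/α - 1) * f z) := by
        rw [hzero, zero_add]
    _ ≤ ∑' k : ℕ, ∫⁻ z in A k, ENNReal.ofReal (z.1 ^ (γ/2 - (d:ℝ)/α - 1) * f z) :=
        lintegral_iUnion_le _ _
    _ ≤ ∑' k : ℕ, ENNReal.ofReal ((u / 2 ^ (k+1)) ^ (γ/2 - (d:ℝ)/α - 1)) *
          (volume (cylP d α ((u / 2 ^ k) ^ (1/α)) 0 0) * M) := ENNReal.tsum_le_tsum hAk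
    _ = ∑' k : ℕ, ENNReal.ofReal ((2:ℝ) ^ (1 + (d:ℝ)/α) * u ^ (γ/2)) *
          (ENNReal.ofReal r) ^ (k+1) * (Vb * M) := by
        refine tsum_congr fun k => ?_
        rw [hvol k]
        have h1 : ENNReal.ofReal ((u / 2 ^ (k+1)) ^ (γ/2 - (d:ℝ)/α - 1)) *
            (ENNReal.ofReal (u / 2 ^ k) *
              (ENNReal.ofReal (((u / 2 ^ k) ^ (1/α)) ^ d) * Vb) * M)
            = ENNReal.ofReal ((u / 2 ^ (k+1)) ^ (γ/2 - (d:ℝ)/α - 1) *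
                ((u / 2 ^ k) * ((u / 2 ^ k) ^ (1/α)) ^ d)) * (Vb * M) := by
          rw [ENNReal.ofReal_mul (Real.rpow_nonneg (hck (k+1)).le _),
            ENNReal.ofReal_mul (hck k).le]
          ring
        rw [h1, key_calc d α γ hα0 u hu k,
          ENNReal.ofReal_mul (by positivity), ENNReal.ofReal_pow hr0.le]
    _ = ENNReal.ofReal ((2:ℝ) ^ (1 + (d:ℝ)/α) * u ^ (γ/2)) *
          (∑' k : ℕ, (ENNReal.ofReal r) ^ (k+1)) * (Vb * M) := by
        rw [ENNReal.tsum_mul_right, ENNReal.tsum_mul_left]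
    _ = ENNReal.ofReal ((2:ℝ) ^ (1 + (d:ℝ)/α) * u ^ (γ/2)) *
          ENNReal.ofReal (r * (1-r)⁻¹) * (Vb * M) := by rw [hgeo]
    _ = ENNReal.ofReal ((2:ℝ) ^ (1 + (d:ℝ)/α) * (r * (1-r)⁻¹) * Vb.toReal *
          ρ ^ (α*γ/2)) * M := by
        have nn1 : (0:ℝ) ≤ r * (1-r)⁻¹ := (mul_pos hr0 (inv_pos.mpr h1r)).le
        have nn2 : (0:ℝ) ≤ (2:ℝ) ^ (1 + (d:ℝ)/α) * u ^ (γ/2) :=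
          mul_nonneg (Real.rpow_pos_of_pos two_pos _).le (Real.rpow_nonneg hu.le _)
        have hre : (2:ℝ) ^ (1 + (d:ℝ)/α) * (r * (1-r)⁻¹) * Vb.toReal * ρ ^ (α*γ/2)
            = (2:ℝ) ^ (1 + (d:ℝ)/α) * u ^ (γ/2) * (r * (1-r)⁻¹) * Vb.toReal := by
          rw [← huγ]; ring
        rw [hre, ENNReal.ofReal_mul (mul_nonneg nn2 nn1), ENNReal.ofReal_mul nn2,
          ENNReal.ofReal_toReal hVbt]
        ring
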